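/- arXiv:1501.02901 — 4 statements merged into one kernel-verified Lean document; each statement's English description precedes it below -/
import Mathlib

section
/- Let X be a topological space, (U_i : i ∈ I) a discrete family of subsets of X, and for each i let B_i = f_i⁻¹(0) be a functionally closed set with B_i ⊆ U_i, where f_i : X → [0,1] is continuous with X \ U_i ⊆ f_i⁻¹(1). Then the union ⋃_i B_i is functionally closed in X, i.e., it is the zero set of a continuous real-valued function on X. -/
open Set Topology Ordinal

/-- A family of sets is discrete if every point has an open neighborhood
meeting at most one member of the family. -/
def DiscreteFam {X I : Type*} [TopologicalSpace X] (U : I → Set X) : Prop :=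
  ∀ x : X, ∃ V : Set X, IsOpen V ∧ x ∈ V ∧
    ∀ i j : I, (V ∩ U i).Nonempty → (V ∩ U j).Nonempty → i = j

/-- A set is functionally closed (a zero set) if it is the preimage of `{0}`
under a continuous real-valued function. -/
def FunClosed {X : Type*} [TopologicalSpace X] (F : Set X) : Prop :=
  ∃ f : X → ℝ, Continuous f ∧ F = f ⁻¹' {0}

/-- A set is functionally open if its complement is functionally closed. -/
def FunOpen {X : Type*} [TopologicalSpace X] (U : Set X) : Prop :=
  FunClosed Uᶜ

/-- The pair (α'th functionally multiplicative class, α'th functionally additive class),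
defined by transfinite recursion. -/
noncomputable def FunClassPair (X : Type*) [TopologicalSpace X] (α : Ordinal) :
    Set (Set X) × Set (Set X) :=
  if α = 0 then ({F | FunClosed F}, {U | FunOpen U})
  else
    ({ A | ∃ f : ℕ → Set X, (∀ n, ∃ β, ∃ _ : β < α, f n ∈ (FunClassPair X β).2) ∧ A = ⋂ n, f n },
     { A | ∃ f : ℕ → Set X, (∀ n, ∃ β, ∃ _ : β < α, f n ∈ (FunClassPair X β).1) ∧ A = ⋃ n, f n })
termination_by α

/-- The α'th functionally multiplicative class. -/
noncomputable def FunMul (X : Type*) [TopologicalSpace X] (α : Ordinal) : Set (Set X) :=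
  (FunClassPair X α).1

/-- The α'th functionally additive class. -/
noncomputable def FunAdd (X : Type*) [TopologicalSpace X] (α : Ordinal) : Set (Set X) :=
  (FunClassPair X α).2

/-- Functionally ambiguous sets of class α. -/
noncomputable def FunAmb {X : Type*} [TopologicalSpace X] (α : Ordinal) (A : Set X) : Prop :=
  A ∈ FunAdd X α ∧ A ∈ FunMul X α

/-- A family is strongly functionally discrete (sfd). -/
def SFDFam {X I : Type*} [TopologicalSpace X] (A : I → Set X) : Prop :=
  ∃ U : I → Set X, DiscreteFam U ∧ (∀ i, FunOpen (U i)) ∧ ∀ i, closure (A i) ⊆ U i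

/-- A collection of sets is sfd (viewed as a family indexed by itself). -/
def SFDSet {X : Type*} [TopologicalSpace X] (𝒜 : Set (Set X)) : Prop :=
  SFDFam (fun b : 𝒜 => (b : Set X))

/-- A collection of sets is a well sfd-family. -/
def WellSFDSet {X : Type*} [TopologicalSpace X] (𝒜 : Set (Set X)) : Prop :=
  ∃ U F : 𝒜 → Set X, DiscreteFam U ∧ DiscreteFam F ∧
    (∀ b, FunOpen (U b)) ∧ (∀ b, FunClosed (F b)) ∧
    ∀ b : 𝒜, (b : Set X) ⊆ F b ∧ F b ⊆ U b

/-- An indexed family is σ-sfd if the index set splits into countably many pieces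
on each of which the family is sfd. -/
def SigmaSFDFam {X I : Type*} [TopologicalSpace X] (A : I → Set X) : Prop :=
  ∃ J : ℕ → Set I, (∀ n, SFDFam (fun i : J n => A i)) ∧ (⋃ n, J n) = Set.univ

/-- `B` is a base for the mapping `f`: every preimage of an open set is a union
of members of `B`. -/
def IsBaseFor {X Y : Type*} [TopologicalSpace X] [TopologicalSpace Y]
    (B : Set (Set X)) (f : X → Y) : Prop :=
  ∀ V : Set Y, IsOpen V → ∃ S ⊆ B, f ⁻¹' V = ⋃₀ S

/-- `f` has a σ-strongly-functionally-discrete base. -/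
def SigmaSFD {X Y : Type*} [TopologicalSpace X] [TopologicalSpace Y] (f : X → Y) : Prop :=
  ∃ B : ℕ → Set (Set X), (∀ n, SFDSet (B n)) ∧ IsBaseFor (⋃ n, B n) f

/-- `f` has a σ-sfd base consisting of functionally ambiguous sets of class α. -/
noncomputable def SigmaSFDAmb {X Y : Type*} [TopologicalSpace X] [TopologicalSpace Y]
    (α : Ordinal) (f : X → Y) : Prop :=
  ∃ B : ℕ → Set (Set X), (∀ n, SFDSet (B n)) ∧ (∀ n, ∀ b ∈ B n, FunAmb α b) ∧
    IsBaseFor (⋃ n, B n) f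

/-- `f` belongs to the α'th functionally Lebesgue class. -/
noncomputable def LebClass {X Y : Type*} [TopologicalSpace X] [TopologicalSpace Y]
    (α : Ordinal) (f : X → Y) : Prop :=
  ∀ V : Set Y, IsOpen V → f ⁻¹' V ∈ FunAdd X α

/-- `Y` has a σ-disjoint base. -/
def SigmaDisjointBase (Y : Type*) [TopologicalSpace Y] : Prop :=
  ∃ V : ℕ → Set (Set Y), (∀ m, (V m).PairwiseDisjoint id) ∧
    TopologicalSpace.IsTopologicalBasis (⋃ m, V m)

theorem stmt1 {X I : Type*} [TopologicalSpace X] (U : I → Set X) (f : I → X → ℝ)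
    (hdisc : DiscreteFam U) (hcont : ∀ i, Continuous (f i))
    (hrange : ∀ i x, f i x ∈ Set.Icc (0 : ℝ) 1)
    (hone : ∀ i, ∀ x ∉ U i, f i x = 1)
    (hsub : ∀ i, f i ⁻¹' {0} ⊆ U i) :
    FunClosed (⋃ i, f i ⁻¹' {0}) := by
  rcases isEmpty_or_nonempty I with h | h
  · refine ⟨fun _ => 1, continuous_const, ?_⟩
    simp
  · set g : X → ℝ := fun x => ⨅ i, f i x with hg
    have hbdd : ∀ x, BddBelow (Set.range fun i => f i x) :=
      fun x => ⟨0, by rintro _ ⟨i, rfl⟩; exact (hrange i x).1⟩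
    have hg0 : ∀ x, 0 ≤ g x := fun x => le_ciInf fun i => (hrange i x).1
    have key : ∀ x, ∃ V : Set X, IsOpen V ∧ x ∈ V ∧
        ((∀ y ∈ V, g y = 1) ∨ ∃ i₀, ∀ y ∈ V, g y = f i₀ y) := by
      intro x
      obtain ⟨V, hVopen, hxV, hV⟩ := hdisc x
      by_cases hex : ∃ i₀, (V ∩ U i₀).Nonempty
      · obtain ⟨i₀, hi₀⟩ := hex
        refine ⟨V, hVopen, hxV, Or.inr ⟨i₀, fun y hy => ?_⟩⟩
        have h1 : ∀ j, j ≠ i₀ → f j y = 1 := by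
          intro j hj
          apply hone j
          intro hyU
          exact hj (hV j i₀ ⟨y, hy, hyU⟩ hi₀)
        refine le_antisymm (ciInf_le (hbdd y) i₀) (le_ciInf fun j => ?_)
        by_cases hj : j = i₀
        · subst hj; exact le_refl _
        · rw [h1 j hj]; exact (hrange i₀ y).2
      · push_neg at hex
        refine ⟨V, hVopen, hxV, Or.inl fun y hy => ?_⟩
        have h1 : ∀ j, f j y = 1 := fun j => hone j y fun hyU =>
          Set.eq_empty_iff_forall_notMem.mp (hex j) y ⟨hy, hyU⟩
        simp only [hg, h1]
        exact ciInf_const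
    have hcg : Continuous g := by
      rw [continuous_iff_continuousAt]
      intro x
      obtain ⟨V, hVopen, hxV, hcase⟩ := key x
      have hmem : V ∈ 𝓝 x := hVopen.mem_nhds hxV
      rcases hcase with hc | ⟨i₀, hc⟩
      · exact continuousAt_const.congr
          (Filter.eventuallyEq_of_mem hmem fun y hy => (hc y hy).symm)
      · exact ((hcont i₀).continuousAt).congr
          (Filter.eventuallyEq_of_mem hmem fun y hy => (hc y hy).symm)
    refine ⟨g, hcg, ?_⟩
    ext x
    simp only [Set.mem_iUnion, Set.mem_preimage, Set.mem_singleton_iff]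
    constructor
    · rintro ⟨i, hi⟩
      refine le_antisymm ?_ (hg0 x)
      calc g x ≤ f i x := ciInf_le (hbdd x) i
        _ = 0 := hi
    · intro hx
      obtain ⟨V, _, hxV, hcase⟩ := key x
      rcases hcase with hc | ⟨i₀, hc⟩
      · exfalso; rw [hc x hxV] at hx; norm_num at hx
      · exact ⟨i₀, by rw [← hc x hxV]; exact hx⟩
end

section
/- Let X be a topological space and (U_i : i ∈ I) a locally finite family of functionally open sets in X. If (B_i : i ∈ I) is a family with each B_i of the α'th functionally additive class and B_i ⊆ U_i for each i, then ⋃_i B_i is of the α'th functionally additive class. The same holds with 'functionally multiplicative' in place of 'functionally additive'. -/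
open Set Topology Ordinal

/-! ### Auxiliary lemmas -/

section Aux

variable {X : Type*} [TopologicalSpace X]

theorem funClosed_univ' : FunClosed (univ : Set X) := ⟨0, continuous_const, by ext x; simp⟩

theorem funClosed_empty' : FunClosed (∅ : Set X) := ⟨1, continuous_const, by ext x; simp⟩

theorem funOpen_univ' : FunOpen (univ : Set X) := by
  rw [FunOpen, compl_univ]; exact funClosed_empty'

theorem mem_funMul_zero {A : Set X} : A ∈ FunMul X 0 ↔ FunClosed A := by
  rw [FunMul, FunClassPair]; simp

theorem mem_funAdd_zero {A : Set X} : A ∈ FunAdd X 0 ↔ FunOpen A := by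
  rw [FunAdd, FunClassPair]; simp

theorem mem_funMul_ne {α : Ordinal} (hα : α ≠ 0) {A : Set X} :
    A ∈ FunMul X α ↔ ∃ f : ℕ → Set X, (∀ n, ∃ β, β < α ∧ f n ∈ FunAdd X β) ∧ A = ⋂ n, f n := by
  rw [FunMul, FunClassPair]; simp [hα, FunAdd]

theorem mem_funAdd_ne {α : Ordinal} (hα : α ≠ 0) {A : Set X} :
    A ∈ FunAdd X α ↔ ∃ f : ℕ → Set X, (∀ n, ∃ β, β < α ∧ f n ∈ FunMul X β) ∧ A = ⋃ n, f n := by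
  rw [FunAdd, FunClassPair]; simp [hα, FunMul]

theorem FunClosed.iInter_funOpen {F : Set X} (hF : FunClosed F) :
    ∃ g : ℕ → Set X, (∀ n, FunOpen (g n)) ∧ F = ⋂ n, g n := by
  obtain ⟨f, hf, rfl⟩ := hF
  refine ⟨fun n => {x | |f x| < 1 / (n + 1 : ℝ)}, fun n => ?_, ?_⟩
  · refine ⟨fun x => max (1 / (n + 1 : ℝ) - |f x|) 0, by continuity, ?_⟩
    ext x
    simp only [mem_compl_iff, mem_setOf_eq, not_lt, mem_preimage, mem_singleton_iff,
      max_eq_right_iff, sub_nonpos]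
  · ext x
    simp only [mem_preimage, mem_singleton_iff, mem_iInter, mem_setOf_eq]
    constructor
    · intro h n; simp [h]; positivity
    · intro h
      by_contra hne
      have hpos : 0 < |f x| := abs_pos.mpr hne
      obtain ⟨n, hn⟩ := exists_nat_one_div_lt hpos
      exact absurd (h n) (by linarith)

theorem FunOpen.iUnion_funClosed {U : Set X} (hU : FunOpen U) :
    ∃ g : ℕ → Set X, (∀ n, FunClosed (g n)) ∧ U = ⋃ n, g n := by
  obtain ⟨f, hf, hfe⟩ := hU
  refine ⟨fun n => {x | 1 / (n + 1 : ℝ) ≤ |f x|}, fun n => ?_, ?_⟩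
  · refine ⟨fun x => max (1 / (n + 1 : ℝ) - |f x|) 0, by continuity, ?_⟩
    ext x
    simp only [mem_setOf_eq, mem_preimage, mem_singleton_iff, max_eq_right_iff, sub_nonpos]
  · have hU : U = {x | f x ≠ 0} := by rw [← compl_compl U, hfe]; ext x; simp
    rw [hU]; ext x
    simp only [mem_setOf_eq, mem_iUnion]
    constructor
    · intro h
      obtain ⟨n, hn⟩ := exists_nat_one_div_lt (abs_pos.mpr h)
      exact ⟨n, by linarith⟩
    · rintro ⟨n, hn⟩ h0
      rw [h0] at hn
      simp at hn
      have : (0:ℝ) < 1 / (n + 1 : ℝ) := by positivity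
      linarith

theorem funClosed_mem_funMul {F : Set X} (hF : FunClosed F) (γ : Ordinal) : F ∈ FunMul X γ := by
  rcases eq_or_ne γ 0 with rfl | hγ
  · exact mem_funMul_zero.mpr hF
  · obtain ⟨g, hgc, hge⟩ := hF.iInter_funOpen
    exact (mem_funMul_ne hγ).mpr
      ⟨g, fun n => ⟨0, pos_iff_ne_zero.mpr hγ, mem_funAdd_zero.mpr (hgc n)⟩, hge⟩

theorem funOpen_mem_funAdd {U : Set X} (hU : FunOpen U) (γ : Ordinal) : U ∈ FunAdd X γ := by
  rcases eq_or_ne γ 0 with rfl | hγ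
  · exact mem_funAdd_zero.mpr hU
  · obtain ⟨g, hgc, hge⟩ := hU.iUnion_funClosed
    exact (mem_funAdd_ne hγ).mpr
      ⟨g, fun n => ⟨0, pos_iff_ne_zero.mpr hγ, mem_funMul_zero.mpr (hgc n)⟩, hge⟩

theorem funMul_mono {β γ : Ordinal} (h : β ≤ γ) : FunMul X β ⊆ FunMul X γ := by
  rcases h.lt_or_eq with h | rfl
  · have hγ : γ ≠ 0 := pos_iff_ne_zero.mp ((zero_le (a := β)).trans_lt h)
    intro A hA
    rcases eq_or_ne β 0 with rfl | hβ
    · exact funClosed_mem_funMul (mem_funMul_zero.mp hA) γ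
    · obtain ⟨f, hf, hfe⟩ := (mem_funMul_ne hβ).mp hA
      exact (mem_funMul_ne hγ).mpr
        ⟨f, fun n => (hf n).imp (fun δ hδ => ⟨hδ.1.trans h, hδ.2⟩), hfe⟩
  · exact subset_rfl

theorem funAdd_mono {β γ : Ordinal} (h : β ≤ γ) : FunAdd X β ⊆ FunAdd X γ := by
  rcases h.lt_or_eq with h | rfl
  · have hγ : γ ≠ 0 := pos_iff_ne_zero.mp ((zero_le (a := β)).trans_lt h)
    intro A hA
    rcases eq_or_ne β 0 with rfl | hβ
    · exact funOpen_mem_funAdd (mem_funAdd_zero.mp hA) γ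
    · obtain ⟨f, hf, hfe⟩ := (mem_funAdd_ne hβ).mp hA
      exact (mem_funAdd_ne hγ).mpr
        ⟨f, fun n => (hf n).imp (fun δ hδ => ⟨hδ.1.trans h, hδ.2⟩), hfe⟩
  · exact subset_rfl

theorem FunClosed.inter' {F G : Set X} (hF : FunClosed F) (hG : FunClosed G) :
    FunClosed (F ∩ G) := by
  obtain ⟨f, hf, rfl⟩ := hF; obtain ⟨g, hg, rfl⟩ := hG
  refine ⟨fun x => |f x| + |g x|, by continuity, ?_⟩
  ext x
  simp only [mem_inter_iff, mem_preimage, mem_singleton_iff]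
  constructor
  · rintro ⟨h1, h2⟩; simp [h1, h2]
  · intro h
    have h1 : |f x| = 0 ∧ |g x| = 0 := by
      constructor <;> nlinarith [abs_nonneg (f x), abs_nonneg (g x)]
    simpa [abs_eq_zero] using h1

theorem FunOpen.inter' {U V : Set X} (hU : FunOpen U) (hV : FunOpen V) :
    FunOpen (U ∩ V) := by
  obtain ⟨f, hf, hfe⟩ := hU; obtain ⟨g, hg, hge⟩ := hV
  refine ⟨fun x => f x * g x, by continuity, ?_⟩
  rw [compl_inter]
  ext x
  constructor
  · rintro (h | h)
    · have : x ∈ f ⁻¹' {0} := hfe ▸ h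
      simp_all [mem_preimage]
    · have : x ∈ g ⁻¹' {0} := hge ▸ h
      simp_all [mem_preimage]
  · intro h
    simp only [mem_preimage, mem_singleton_iff, mul_eq_zero] at h
    rcases h with h | h
    · exact Or.inl (hfe ▸ (by simpa using h))
    · exact Or.inr (hge ▸ (by simpa using h))

theorem funMul_inter {α : Ordinal} {A B : Set X} (hA : A ∈ FunMul X α) (hB : B ∈ FunMul X α) :
    A ∩ B ∈ FunMul X α := by
  rcases eq_or_ne α 0 with rfl | hα
  · exact mem_funMul_zero.mpr ((mem_funMul_zero.mp hA).inter' (mem_funMul_zero.mp hB))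
  · obtain ⟨f, hf, rfl⟩ := (mem_funMul_ne hα).mp hA
    obtain ⟨g, hg, rfl⟩ := (mem_funMul_ne hα).mp hB
    refine (mem_funMul_ne hα).mpr ⟨fun n => if n % 2 = 0 then f (n / 2) else g (n / 2),
      fun n => ?_, ?_⟩
    · simp only
      split
      · exact hf _
      · exact hg _
    · ext x
      simp only [mem_inter_iff, mem_iInter]
      constructor
      · rintro ⟨h1, h2⟩ n
        split
        · exact h1 _
        · exact h2 _
      · intro h
        constructor
        · intro k
          have := h (2 * k)
          rw [if_pos (by omega)] at this
          simpa [Nat.mul_div_cancel_left k (by norm_num : 0 < 2)] using this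
        · intro k
          have := h (2 * k + 1)
          rw [if_neg (by omega)] at this
          have h2 : (2 * k + 1) / 2 = k := by omega
          rwa [h2] at this

theorem funAdd_inter {α : Ordinal} {A B : Set X} (hA : A ∈ FunAdd X α) (hB : B ∈ FunAdd X α) :
    A ∩ B ∈ FunAdd X α := by
  rcases eq_or_ne α 0 with rfl | hα
  · exact mem_funAdd_zero.mpr ((mem_funAdd_zero.mp hA).inter' (mem_funAdd_zero.mp hB))
  · obtain ⟨f, hf, rfl⟩ := (mem_funAdd_ne hα).mp hA
    obtain ⟨g, hg, rfl⟩ := (mem_funAdd_ne hα).mp hB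
    refine (mem_funAdd_ne hα).mpr ⟨fun n => f n.unpair.1 ∩ g n.unpair.2, fun n => ?_, ?_⟩
    · obtain ⟨β, hβ, hfm⟩ := hf n.unpair.1
      obtain ⟨γ, hγ, hgm⟩ := hg n.unpair.2
      exact ⟨max β γ, max_lt hβ hγ,
        funMul_inter (funMul_mono (le_max_left _ _) hfm) (funMul_mono (le_max_right _ _) hgm)⟩
    · ext x
      simp only [mem_inter_iff, mem_iUnion]
      constructor
      · rintro ⟨⟨n, hn⟩, ⟨m, hm⟩⟩
        exact ⟨Nat.pair n m, by simpa [Nat.unpair_pair] using ⟨hn, hm⟩⟩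
      · rintro ⟨p, hp1, hp2⟩
        exact ⟨⟨_, hp1⟩, ⟨_, hp2⟩⟩

/-! ### Base case: locally finite unions at level zero -/

theorem funOpen_iUnion_of_locallyFinite {I : Type*} {B : I → Set X} (hlf : LocallyFinite B)
    (hB : ∀ i, FunOpen (B i)) : FunOpen (⋃ i, B i) := by
  choose f hf hfe using hB
  have hsupp : ∀ i, Function.support (fun x => |f i x|) = B i := by
    intro i
    ext x
    simp only [Function.mem_support, ne_eq, abs_eq_zero]
    rw [← not_iff_not, not_not, ← mem_compl_iff, hfe i]
    simp
  refine ⟨fun x => ∑ᶠ i, |f i x|, ?_, ?_⟩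
  · exact continuous_finsum (fun i => (hf i).abs) (by simpa only [hsupp] using hlf)
  · ext x
    have hfin : (Function.support fun i => |f i x|).Finite := by
      apply (hlf.point_finite x).subset
      intro i hi
      have : x ∈ Function.support fun y => |f i y| := hi
      rw [hsupp i] at this
      exact this
    simp only [mem_compl_iff, mem_iUnion, not_exists, mem_preimage, mem_singleton_iff]
    constructor
    · intro h
      have : ∀ i, |f i x| = 0 := by
        intro i
        have hxc : x ∈ (B i)ᶜ := h i
        rw [hfe i] at hxc
        simpa using hxc
      calc ∑ᶠ i, |f i x| = ∑ᶠ i : I, (0:ℝ) := finsum_congr this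
        _ = 0 := finsum_zero
    · intro h i
      by_contra hx
      have hmem : i ∈ hfin.toFinset := by
        rw [Set.Finite.mem_toFinset, Function.mem_support]
        have : x ∈ B i := hx
        rw [← hsupp i] at this
        exact this
      have heq : ∑ᶠ j, |f j x| = ∑ j ∈ hfin.toFinset, |f j x| :=
        finsum_eq_sum_of_support_subset _ (by rw [Set.Finite.coe_toFinset])
      have hpos : 0 < |f i x| := by
        rw [Set.Finite.mem_toFinset, Function.mem_support] at hmem
        exact lt_of_le_of_ne (abs_nonneg _) (Ne.symm hmem)
      have hle : |f i x| ≤ ∑ j ∈ hfin.toFinset, |f j x| :=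
        Finset.single_le_sum (fun j _ => abs_nonneg (f j x)) hmem
      rw [heq] at h
      linarith

theorem funClosed_iUnion_of_locallyFinite {I : Type*} {U B : I → Set X} (hlf : LocallyFinite U)
    (hUo : ∀ i, FunOpen (U i)) (hsub : ∀ i, B i ⊆ U i) (hB : ∀ i, FunClosed (B i)) :
    FunClosed (⋃ i, B i) := by
  choose f hf hfe using hB
  choose u hu hue using hUo
  set q : I → X → ℝ := fun i x => |f i x| / (|f i x| + |u i x|) with hq
  have hden : ∀ i x, 0 < |f i x| + |u i x| := by
    intro i x
    rcases (abs_nonneg (f i x)).lt_or_eq with h | h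
    · linarith [abs_nonneg (u i x)]
    rcases (abs_nonneg (u i x)).lt_or_eq with h' | h'
    · linarith
    exfalso
    have hxB : x ∈ B i := by rw [hfe i]; simpa using h.symm
    have hxU : x ∈ (U i)ᶜ := by rw [hue i]; simpa using h'.symm
    exact hxU (hsub i hxB)
  have hqc : ∀ i, Continuous (q i) :=
    fun i => ((hf i).abs.div (((hf i).abs).add (hu i).abs) (fun x => (hden i x).ne'))
  have hq0 : ∀ i x, q i x = 0 ↔ x ∈ B i := by
    intro i x
    rw [hq]
    simp only [div_eq_zero_iff, abs_eq_zero]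
    rw [hfe i]
    constructor
    · rintro (h | h)
      · simpa using h
      · exact absurd h (hden i x).ne'
    · intro h; left; simpa using h
  have hsupp : ∀ i, Function.mulSupport (q i) ⊆ U i := by
    intro i x hx
    by_contra hxU
    have hux : u i x = 0 := by
      have : x ∈ (U i)ᶜ := hxU
      rw [hue i] at this; simpa using this
    have hfx : f i x ≠ 0 := by
      intro h0
      have : x ∈ B i := by rw [hfe i]; simpa using h0
      exact hxU (hsub i this)
    apply hx
    rw [hq]
    simp only [hux, abs_zero, add_zero]
    exact div_self (abs_ne_zero.mpr hfx)
  refine ⟨fun x => ∏ᶠ i, q i x, ?_, ?_⟩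
  · exact continuous_finprod hqc (hlf.subset hsupp)
  · ext x
    have hfin : (Function.mulSupport fun i => q i x).Finite :=
      (hlf.point_finite x).subset (fun i hi => hsupp i hi)
    have heq : ∏ᶠ i, q i x = ∏ i ∈ hfin.toFinset, q i x :=
      finprod_eq_prod_of_mulSupport_subset _ (by rw [Set.Finite.coe_toFinset])
    simp only [mem_iUnion, mem_preimage, mem_singleton_iff]
    constructor
    · rintro ⟨i, hi⟩
      exact finprod_eq_zero (fun j => q j x) i ((hq0 i x).mpr hi) hfin
    · intro h
      rw [heq, Finset.prod_eq_zero_iff] at h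
      obtain ⟨i, _, hi⟩ := h
      exact ⟨i, (hq0 i x).mp hi⟩

/-! ### Normal forms with a fixed cofinal sequence of classes -/

/-- A strictly monotone enumeration dominating `m`. -/
private def phiAux (m : ℕ → ℕ) : ℕ → ℕ
  | 0 => m 0
  | n + 1 => max (m (n + 1)) (phiAux m n + 1)

private theorem phiAux_strictMono (m : ℕ → ℕ) : StrictMono (phiAux m) :=
  strictMono_nat_of_lt_succ fun _ =>
    lt_of_lt_of_le (Nat.lt_succ_self _) (le_max_right _ _)

private theorem le_phiAux (m : ℕ → ℕ) : ∀ n, m n ≤ phiAux m n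
  | 0 => le_rfl
  | _ + 1 => le_max_left _ _

theorem funMul_normal {α : Ordinal} (hα : α ≠ 0) (a : ℕ → Ordinal) (hmono : Monotone a)
    (hlt : ∀ n, a n < α) (hcof : ∀ β, β < α → ∃ n, β ≤ a n) {A : Set X} :
    A ∈ FunMul X α ↔ ∃ C : ℕ → Set X, (∀ n, C n ∈ FunAdd X (a n)) ∧ A = ⋂ n, C n := by
  constructor
  · intro hA
    obtain ⟨f, hf, rfl⟩ := (mem_funMul_ne hα).mp hA
    choose β hβlt hβmem using hf
    choose m hm using fun n => hcof (β n) (hβlt n)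
    set φ := phiAux m with hφ
    have hφinj : Function.Injective φ := (phiAux_strictMono m).injective
    classical
    refine ⟨fun k => if h : ∃ n, φ n = k then f h.choose else univ, fun k => ?_, ?_⟩
    · show (if h : ∃ n, φ n = k then f h.choose else univ) ∈ FunAdd X (a k)
      by_cases h : ∃ n, φ n = k
      · rw [dif_pos h]
        refine funAdd_mono ?_ (hβmem h.choose)
        calc β h.choose ≤ a (m h.choose) := hm _
          _ ≤ a (φ h.choose) := hmono (le_phiAux m _)
          _ = a k := by rw [h.choose_spec]
      · rw [dif_neg h]; exact funOpen_mem_funAdd funOpen_univ' _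
    · ext x
      simp only [mem_iInter]
      constructor
      · intro hx k
        by_cases h : ∃ n, φ n = k
        · rw [dif_pos h]; exact hx _
        · rw [dif_neg h]; trivial
      · intro hx n
        have := hx (φ n)
        rw [dif_pos (⟨n, rfl⟩ : ∃ k, φ k = φ n)] at this
        have he : (⟨n, rfl⟩ : ∃ k, φ k = φ n).choose = n :=
          hφinj (⟨n, rfl⟩ : ∃ k, φ k = φ n).choose_spec
        rwa [he] at this
  · rintro ⟨C, hC, rfl⟩
    exact (mem_funMul_ne hα).mpr ⟨C, fun n => ⟨a n, hlt n, hC n⟩, rfl⟩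

theorem funAdd_normal {α : Ordinal} (hα : α ≠ 0) (a : ℕ → Ordinal) (hmono : Monotone a)
    (hlt : ∀ n, a n < α) (hcof : ∀ β, β < α → ∃ n, β ≤ a n) {A : Set X} :
    A ∈ FunAdd X α ↔ ∃ C : ℕ → Set X, (∀ n, C n ∈ FunMul X (a n)) ∧ A = ⋃ n, C n := by
  constructor
  · intro hA
    obtain ⟨f, hf, rfl⟩ := (mem_funAdd_ne hα).mp hA
    choose β hβlt hβmem using hf
    choose m hm using fun n => hcof (β n) (hβlt n)
    set φ := phiAux m with hφ
    have hφinj : Function.Injective φ := (phiAux_strictMono m).injective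
    classical
    refine ⟨fun k => if h : ∃ n, φ n = k then f h.choose else ∅, fun k => ?_, ?_⟩
    · show (if h : ∃ n, φ n = k then f h.choose else ∅) ∈ FunMul X (a k)
      by_cases h : ∃ n, φ n = k
      · rw [dif_pos h]
        refine funMul_mono ?_ (hβmem h.choose)
        calc β h.choose ≤ a (m h.choose) := hm _
          _ ≤ a (φ h.choose) := hmono (le_phiAux m _)
          _ = a k := by rw [h.choose_spec]
      · rw [dif_neg h]; exact funClosed_mem_funMul funClosed_empty' _
    · ext x
      simp only [mem_iUnion]
      constructor
      · rintro ⟨n, hn⟩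
        refine ⟨φ n, ?_⟩
        rw [dif_pos (⟨n, rfl⟩ : ∃ k, φ k = φ n)]
        have he : (⟨n, rfl⟩ : ∃ k, φ k = φ n).choose = n :=
          hφinj (⟨n, rfl⟩ : ∃ k, φ k = φ n).choose_spec
        rwa [he]
      · rintro ⟨k, hk⟩
        by_cases h : ∃ n, φ n = k
        · rw [dif_pos h] at hk; exact ⟨_, hk⟩
        · rw [dif_neg h] at hk; exact absurd hk (notMem_empty x)
  · rintro ⟨C, hC, rfl⟩
    exact (mem_funAdd_ne hα).mpr ⟨C, fun n => ⟨a n, hlt n, hC n⟩, rfl⟩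

theorem exists_cofinal_seq {α : Ordinal} (hα1 : α < ω₁) (hα0 : α ≠ 0) :
    ∃ a : ℕ → Ordinal, Monotone a ∧ (∀ n, a n < α) ∧ ∀ β, β < α → ∃ n, β ≤ a n := by
  have hcnt : (Iio α).Countable := by
    rw [Cardinal.countable_iff_lt_aleph_one, Ordinal.mk_Iio_ordinal, Cardinal.lift_lt_aleph_one]
    rw [← Cardinal.lt_ord, Cardinal.ord_aleph]
    exact hα1
  obtain ⟨b, hb⟩ := hcnt.exists_eq_range ⟨0, pos_iff_ne_zero.mpr hα0⟩
  have hblt : ∀ n, b n < α := fun n => by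
    have : b n ∈ Iio α := hb ▸ mem_range_self n
    exact this
  set a : ℕ → Ordinal := fun n => Nat.rec (b 0) (fun k ih => max ih (b (k + 1))) n with ha
  have hsucc : ∀ n, a (n + 1) = max (a n) (b (n + 1)) := fun n => rfl
  have hmono : Monotone a := monotone_nat_of_le_succ fun n => by rw [hsucc]; exact le_max_left _ _
  have hlt : ∀ n, a n < α := by
    intro n
    induction n with
    | zero => exact hblt 0
    | succ k ih => rw [hsucc]; exact max_lt ih (hblt (k + 1))
  have hble : ∀ n, b n ≤ a n := by
    intro n
    cases n with
    | zero => exact le_rfl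
    | succ k => rw [hsucc]; exact le_max_right _ _
  refine ⟨a, hmono, hlt, fun β hβ => ?_⟩
  have : β ∈ range b := hb ▸ hβ
  obtain ⟨n, rfl⟩ := this
  exact ⟨n, hble n⟩

/-! ### The main induction -/

theorem key_lemma {X I : Type*} [TopologicalSpace X] (U : I → Set X) (hlf : LocallyFinite U)
    (hUo : ∀ i, FunOpen (U i)) :
    ∀ α : Ordinal, α < ω₁ → ∀ B : I → Set X, (∀ i, B i ⊆ U i) →
      ((∀ i, B i ∈ FunAdd X α) → (⋃ i, B i) ∈ FunAdd X α) ∧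
      ((∀ i, B i ∈ FunMul X α) → (⋃ i, B i) ∈ FunMul X α) := by
  intro α
  induction α using Ordinal.induction with
  | h α IH =>
  intro hα B hsub
  by_cases h0 : α = 0
  · subst h0
    refine ⟨fun hB => ?_, fun hB => ?_⟩
    · exact mem_funAdd_zero.mpr
        (funOpen_iUnion_of_locallyFinite (hlf.subset hsub) fun i => mem_funAdd_zero.mp (hB i))
    · exact mem_funMul_zero.mpr
        (funClosed_iUnion_of_locallyFinite hlf hUo hsub fun i => mem_funMul_zero.mp (hB i))
  · obtain ⟨a, hamono, halt, hacof⟩ := exists_cofinal_seq hα h0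
    constructor
    · intro hB
      have h1 := fun i => (funAdd_normal h0 a hamono halt hacof).mp (hB i)
      choose f hfc hfe using h1
      have key : (⋃ i, B i) = ⋃ n, ⋃ i, f i n :=
        (iUnion_congr hfe).trans (iUnion_comm f)
      rw [key]
      refine (mem_funAdd_ne h0).mpr ⟨fun n => ⋃ i, f i n, fun n => ⟨a n, halt n, ?_⟩, rfl⟩
      refine (IH (a n) (halt n) ((halt n).trans hα) (fun i => f i n) (fun i => ?_)).2
        (fun i => hfc i n)
      calc f i n ⊆ ⋃ m, f i m := subset_iUnion _ n
        _ = B i := (hfe i).symm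
        _ ⊆ U i := hsub i
    · intro hB
      have h1 := fun i => (funMul_normal h0 a hamono halt hacof).mp (hB i)
      choose g hgc hge using h1
      set G : I → ℕ → Set X := fun i n =>
        Nat.rec (g i 0 ∩ U i) (fun k ih => ih ∩ g i (k + 1)) n with hG
      have hGsucc : ∀ i n, G i (n + 1) = G i n ∩ g i (n + 1) := fun i n => rfl
      have hGzero : ∀ i, G i 0 = g i 0 ∩ U i := fun i => rfl
      have hGU : ∀ i n, G i n ⊆ U i := by
        intro i n
        induction n with
        | zero => rw [hGzero]; exact inter_subset_right
        | succ k ih => rw [hGsucc]; exact inter_subset_left.trans ih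
      have hGanti : ∀ i, Antitone (G i) := fun i =>
        antitone_nat_of_succ_le fun n => by rw [hGsucc]; exact inter_subset_left
      have hGg : ∀ i n, G i n ⊆ g i n := by
        intro i n
        cases n with
        | zero => rw [hGzero]; exact inter_subset_left
        | succ k => rw [hGsucc]; exact inter_subset_right
      have hGclass : ∀ i n, G i n ∈ FunAdd X (a n) := by
        intro i n
        induction n with
        | zero => exact funAdd_inter (hgc i 0) (funOpen_mem_funAdd (hUo i) _)
        | succ k ih =>
          rw [hGsucc]
          exact funAdd_inter (funAdd_mono (hamono (Nat.le_succ k)) ih) (hgc i (k + 1))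
      have hGB : ∀ i, (⋂ n, G i n) = B i := by
        intro i
        apply Subset.antisymm
        · rw [hge i]
          exact iInter_mono (hGg i)
        · intro x hx
          have hxg : ∀ m, x ∈ g i m := by
            have h2 : x ∈ ⋂ n, g i n := (hge i) ▸ hx
            exact fun m => mem_iInter.mp h2 m
          have hxU : x ∈ U i := hsub i hx
          rw [mem_iInter]
          intro n
          induction n with
          | zero => rw [hGzero]; exact ⟨hxg 0, hxU⟩
          | succ k ih => rw [hGsucc]; exact ⟨ih, hxg (k + 1)⟩
      have key : (⋃ i, B i) = ⋂ n, ⋃ i, G i n := by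
        apply Subset.antisymm
        · intro x hx
          obtain ⟨i, hxi⟩ := mem_iUnion.mp hx
          rw [← hGB i, mem_iInter] at hxi
          exact mem_iInter.mpr fun n => mem_iUnion.mpr ⟨i, hxi n⟩
        · intro x hx
          rw [mem_iInter] at hx
          by_contra hxn
          rw [mem_iUnion] at hxn
          push_neg at hxn
          have hxn' : ∀ i, ∃ n, x ∉ G i n := by
            intro i
            by_contra hc
            push_neg at hc
            exact hxn i (hGB i ▸ mem_iInter.mpr hc)
          choose nn hnn using hxn'
          have hJ : {i | x ∈ U i}.Finite := hlf.point_finite x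
          set N := hJ.toFinset.sup nn with hN
          obtain ⟨i, hxi⟩ := mem_iUnion.mp (hx N)
          have hiJ : i ∈ hJ.toFinset := by
            rw [Set.Finite.mem_toFinset]
            exact hGU i N hxi
          exact hnn i (hGanti i (Finset.le_sup hiJ) hxi)
      rw [key]
      exact (mem_funMul_ne h0).mpr ⟨fun n => ⋃ i, G i n, fun n => ⟨a n, halt n,
        (IH (a n) (halt n) ((halt n).trans hα) (fun i => G i n) (fun i => hGU i n)).1
          (fun i => hGclass i n)⟩, rfl⟩

end Aux

theorem stmt2 {X I : Type*} [TopologicalSpace X] (α : Ordinal) (hα : α < ω₁)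
    (U B : I → Set X) (hlf : LocallyFinite U) (hUo : ∀ i, FunOpen (U i))
    (hsub : ∀ i, B i ⊆ U i) :
    ((∀ i, B i ∈ FunAdd X α) → (⋃ i, B i) ∈ FunAdd X α) ∧
    ((∀ i, B i ∈ FunMul X α) → (⋃ i, B i) ∈ FunMul X α) :=
  key_lemma U hlf hUo α hα B hsub
end

section
/- If a mapping f : X → Y between topological spaces has a σ-sfd base, then f has a σ-sfd base B = ⋃ₙ Bₙ where each Bₙ is a well sfd-family, i.e., there exist discrete families (U_B) of functionally open sets and (F_B) of functionally closed sets with B ⊆ F_B ⊆ U_B for each B ∈ Bₙ. -/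
open Set Topology Ordinal

lemma funOpen_decomp {X : Type*} [TopologicalSpace X] {U : Set X} (hU : FunOpen U) :
    ∃ F : ℕ → Set X, (∀ k, FunClosed (F k)) ∧ (∀ k, F k ⊆ U) ∧ U ⊆ ⋃ k, F k := by
  obtain ⟨g, hg, hUc⟩ := hU
  have hmem : ∀ x, x ∈ U ↔ g x ≠ 0 := by
    intro x
    constructor
    · intro hx h
      have hx' : x ∈ Uᶜ := by rw [hUc]; exact h
      exact hx' hx
    · intro h
      by_contra hx
      have hx' : x ∈ Uᶜ := hx
      rw [hUc] at hx'
      exact h hx'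
  refine ⟨fun k => {x | ((k : ℝ) + 1)⁻¹ ≤ |g x|}, ?_, ?_, ?_⟩
  · intro k
    refine ⟨fun x => max (((k : ℝ) + 1)⁻¹ - |g x|) 0, by continuity, ?_⟩
    ext x
    simp only [Set.mem_setOf_eq, Set.mem_preimage, Set.mem_singleton_iff,
      max_eq_right_iff, sub_nonpos]
  · intro k x hx
    rw [hmem]
    intro h
    rw [Set.mem_setOf_eq, h, abs_zero] at hx
    have h0 : (0 : ℝ) < ((k : ℝ) + 1)⁻¹ := by positivity
    linarith
  · intro x hx
    have hgx := (hmem x).mp hx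
    have hpos : 0 < |g x| := abs_pos.mpr hgx
    obtain ⟨k, hk⟩ := exists_nat_gt (|g x|)⁻¹
    refine Set.mem_iUnion.mpr ⟨k, ?_⟩
    have hk1 : (0 : ℝ) < (k : ℝ) + 1 := by positivity
    have h1 : (|g x|)⁻¹ < (k : ℝ) + 1 := hk.trans (lt_add_one _)
    have h3 : (1 : ℝ) < ((k : ℝ) + 1) * |g x| := by
      have h2 := mul_lt_mul_of_pos_right h1 hpos
      rwa [inv_mul_cancel₀ (ne_of_gt hpos)] at h2
    have h4 : ((k : ℝ) + 1)⁻¹ * ((k : ℝ) + 1) = 1 := inv_mul_cancel₀ (ne_of_gt hk1)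
    show ((k : ℝ) + 1)⁻¹ ≤ |g x|
    nlinarith [h3, h4, hk1]

theorem stmt6 {X Y : Type*} [TopologicalSpace X] [TopologicalSpace Y]
    (f : X → Y) (hf : SigmaSFD f) :
    ∃ B : ℕ → Set (Set X), (∀ n, WellSFDSet (B n)) ∧ IsBaseFor (⋃ n, B n) f := by
  obtain ⟨B, hsfd, hbase⟩ := hf
  choose U hUdisc hUopen hUcl using hsfd
  choose F hFcl hFsub hFcov using fun n (b : B n) => funOpen_decomp (hUopen n b)
  set e : ℕ ≃ ℕ × ℕ := (Denumerable.eqv (ℕ × ℕ)).symm with he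
  set Bwell : ℕ × ℕ → Set (Set X) :=
    fun p => {s | ∃ b : B p.1, s = ↑b ∩ F p.1 b p.2} with hBwell
  have key : ∀ p, WellSFDSet (Bwell p) := by
    rintro ⟨n, k⟩
    choose b hb using fun s : Bwell (n, k) => s.2
    refine ⟨fun s => U n (b s), fun s => F n (b s) k, ?_, ?_,
      fun s => hUopen n (b s), fun s => hFcl n (b s) k, ?_⟩
    · intro x
      obtain ⟨V, hVo, hxV, hV⟩ := hUdisc n x
      refine ⟨V, hVo, hxV, fun s t hs ht => ?_⟩
      have hbst := hV (b s) (b t) hs ht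
      exact Subtype.ext (by rw [hb s, hb t, hbst])
    · intro x
      obtain ⟨V, hVo, hxV, hV⟩ := hUdisc n x
      refine ⟨V, hVo, hxV, fun s t hs ht => ?_⟩
      have hs' : (V ∩ U n (b s)).Nonempty :=
        hs.mono (Set.inter_subset_inter_right _ (hFsub n (b s) k))
      have ht' : (V ∩ U n (b t)).Nonempty :=
        ht.mono (Set.inter_subset_inter_right _ (hFsub n (b t) k))
      have hbst := hV (b s) (b t) hs' ht'
      exact Subtype.ext (by rw [hb s, hb t, hbst])
    · intro s
      refine ⟨?_, hFsub n (b s) k⟩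
      intro x hx
      rw [hb s] at hx
      exact hx.2
  refine ⟨fun m => Bwell (e m), fun m => key (e m), ?_⟩
  intro V hV
  obtain ⟨S, hS, hSV⟩ := hbase V hV
  refine ⟨{t | ∃ n k, ∃ b : B n, ↑b ∈ S ∧ t = ↑b ∩ F n b k}, ?_, ?_⟩
  · rintro t ⟨n, k, b, hbS, rfl⟩
    refine Set.mem_iUnion.mpr ⟨e.symm (n, k), ?_⟩
    show _ ∈ Bwell (e (e.symm (n, k)))
    rw [Equiv.apply_symm_apply]
    exact ⟨b, rfl⟩
  · rw [hSV]
    ext x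
    simp only [Set.mem_sUnion, Set.mem_setOf_eq]
    constructor
    · rintro ⟨s, hsS, hxs⟩
      obtain ⟨n, hn⟩ := Set.mem_iUnion.mp (hS hsS)
      have hxU : x ∈ U n ⟨s, hn⟩ := hUcl n ⟨s, hn⟩ (subset_closure hxs)
      obtain ⟨k, hk⟩ := Set.mem_iUnion.mp (hFcov n ⟨s, hn⟩ hxU)
      exact ⟨s ∩ F n ⟨s, hn⟩ k, ⟨n, k, ⟨s, hn⟩, hsS, rfl⟩, hxs, hk⟩
    · rintro ⟨t, ⟨n, k, bb, hbS, rfl⟩, hxt⟩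
      exact ⟨↑bb, hbS, hxt.1⟩
end

section
/- Let A₁, ..., Aₙ be strongly functionally discrete families of subsets of a topological space X, let A_k = ⋃ A_k (the union of the members of the k-th family), and suppose the family (A_1, ..., A_n) of these unions is itself strongly functionally discrete. Then the combined family ⋃_{k=1}^n A_k (all members of all n families together) is strongly functionally discrete. -/
open Set Topology Ordinal

lemma funopen_inter {X : Type*} [TopologicalSpace X] {U V : Set X}
    (hU : FunOpen U) (hV : FunOpen V) : FunOpen (U ∩ V) := by
  obtain ⟨f, hf, hfe⟩ := hU
  obtain ⟨g, hg, hge⟩ := hV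
  refine ⟨fun x => f x * g x, hf.mul hg, ?_⟩
  ext x
  simp only [Set.mem_compl_iff, Set.mem_inter_iff, Set.mem_preimage, Set.mem_singleton_iff,
    mul_eq_zero, not_and_or]
  constructor
  · rintro (h | h)
    · left; have := hfe ▸ (Set.mem_compl h : x ∈ Uᶜ); exact this
    · right; have := hge ▸ (Set.mem_compl h : x ∈ Vᶜ); exact this
  · rintro (h | h)
    · left; intro hx; exact absurd (hfe ▸ h : x ∈ Uᶜ) (not_not.2 hx)
    · right; intro hx; exact absurd (hge ▸ h : x ∈ Vᶜ) (not_not.2 hx)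

theorem stmt13 {X : Type*} [TopologicalSpace X] {n : ℕ} {I : Fin n → Type*}
    (A : (k : Fin n) → I k → Set X)
    (hsfd : ∀ k, SFDFam (A k))
    (hU : SFDFam (fun k : Fin n => ⋃ i, A k i)) :
    SFDFam (fun p : (k : Fin n) × I k => A p.1 p.2) := by
  obtain ⟨W, hWd, hWo, hWc⟩ := hU
  choose U hUd hUo hUc using hsfd
  refine ⟨fun p => U p.1 p.2 ∩ W p.1, ?_,
    fun p => funopen_inter (hUo p.1 p.2) (hWo p.1),
    fun p => subset_inter (hUc p.1 p.2)
      (fun x hx => hWc p.1 (closure_mono (subset_iUnion _ p.2) hx))⟩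
  intro x
  obtain ⟨V0, hV0o, hxV0, hV0⟩ := hWd x
  choose Vk hVko hxVk hVk using fun k => hUd k x
  refine ⟨V0 ∩ ⋂ k, Vk k, hV0o.inter (isOpen_iInter_of_finite hVko),
    ⟨hxV0, mem_iInter.2 hxVk⟩, ?_⟩
  rintro ⟨k, i⟩ ⟨l, j⟩ ⟨y, hy⟩ ⟨z, hz⟩
  obtain rfl : k = l := hV0 k l ⟨y, hy.1.1, hy.2.2⟩ ⟨z, hz.1.1, hz.2.2⟩
  obtain rfl : i = j :=
    hVk k i j ⟨y, mem_iInter.1 hy.1.2 k, hy.2.1⟩ ⟨z, mem_iInter.1 hz.1.2 k, hz.2.1⟩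
  rfl
end
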